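/- Let H be any integer satisfying H·(a_k - a_{k-1}) ≥ (h₀-1)·a_k - n(h₀-1, A_k). Then for all h ≥ H and all x with n(h, A_k) < x < h·a_k, if x has an h-representation with c_k = 0, then x ≤ h·a_{k-1}; consequently any gap x at level h ≥ H satisfies: x + a_k is a gap at level h+1. In particular H ≥ h₂. -/
import Mathlib


/-- `x` is a sum of at most `h` elements of `{a 1, ..., a k}` with repetition. -/
def IsRep (k : ℕ) (a : ℕ → ℕ) (h x : ℕ) : Prop :=
  ∃ c : ℕ → ℕ, (∑ i ∈ Finset.Icc 1 k, c i) ≤ h ∧ (∑ i ∈ Finset.Icc 1 k, c i * a i) = x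

/-- `n` is the `h`-range of `{a 1, ..., a k}`. -/
def IsRange (k : ℕ) (a : ℕ → ℕ) (h n : ℕ) : Prop :=
  (∀ x ≤ n, IsRep k a h x) ∧ ¬ IsRep k a h (n + 1)

/-- `x` is a gap at level `h`: `n(h) < x < h·a k` and `x` has no `h`-representation. -/
def IsGap (k : ℕ) (a : ℕ → ℕ) (n : ℕ → ℕ) (h x : ℕ) : Prop :=
  n h < x ∧ x < h * a k ∧ ¬ IsRep k a h x

lemma isRep_mono {k : ℕ} {a : ℕ → ℕ} {h h' x : ℕ} (hh : h ≤ h') :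
    IsRep k a h x → IsRep k a h' x := by
  rintro ⟨c, hc, hv⟩; exact ⟨c, hc.trans hh, hv⟩

lemma sum_succ_top {k : ℕ} (hk : 1 ≤ k) (c : ℕ → ℕ) :
    ∑ i ∈ Finset.Icc 1 k, (if i = k then c i + 1 else c i) = (∑ i ∈ Finset.Icc 1 k, c i) + 1 := by
  have hmem : k ∈ Finset.Icc 1 k := by simp [hk]
  have h1 : ∀ i ∈ Finset.Icc 1 k, (if i = k then c i + 1 else c i) = c i + (if i = k then 1 else 0) := by
    intro i _; split <;> simp
  rw [Finset.sum_congr rfl h1, Finset.sum_add_distrib,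
    Finset.sum_ite_eq' (Finset.Icc 1 k) k (fun _ => 1), if_pos hmem]

lemma sum_succ_top_mul {k : ℕ} (hk : 1 ≤ k) (c a : ℕ → ℕ) :
    ∑ i ∈ Finset.Icc 1 k, (if i = k then c i + 1 else c i) * a i
      = (∑ i ∈ Finset.Icc 1 k, c i * a i) + a k := by
  have hmem : k ∈ Finset.Icc 1 k := by simp [hk]
  have h1 : ∀ i ∈ Finset.Icc 1 k, (if i = k then c i + 1 else c i) * a i
      = c i * a i + (if i = k then a i else 0) := by
    intro i _; split
    · next hik => subst hik; ring
    · simp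
  rw [Finset.sum_congr rfl h1, Finset.sum_add_distrib,
    Finset.sum_ite_eq' (Finset.Icc 1 k) k (fun i => a i), if_pos hmem]

lemma isRep_add {k : ℕ} (hk : 1 ≤ k) {a : ℕ → ℕ} {h x : ℕ} :
    IsRep k a h x → IsRep k a (h + 1) (x + a k) := by
  rintro ⟨c, hc, hv⟩
  refine ⟨fun i => if i = k then c i + 1 else c i, ?_, ?_⟩
  · rw [sum_succ_top hk c]; omega
  · rw [sum_succ_top_mul hk c a, hv]

/-- From a representation with `c k ≥ 1`, peel off one copy of `a k`. -/
lemma isRep_peel {k : ℕ} (hk : 1 ≤ k) {a : ℕ → ℕ} {h y : ℕ} (c : ℕ → ℕ)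
    (hc : (∑ i ∈ Finset.Icc 1 k, c i) ≤ h + 1)
    (hv : (∑ i ∈ Finset.Icc 1 k, c i * a i) = y) (hck : 1 ≤ c k) :
    a k ≤ y ∧ IsRep k a h (y - a k) := by
  set c' : ℕ → ℕ := fun i => if i = k then c i - 1 else c i with hc'
  have hcc : ∀ i, c i = if i = k then c' i + 1 else c' i := by
    intro i; by_cases hik : i = k <;> simp [hc', hik] <;> omega
  have hs : (∑ i ∈ Finset.Icc 1 k, c i) = (∑ i ∈ Finset.Icc 1 k, c' i) + 1 := by
    rw [Finset.sum_congr rfl (fun i _ => hcc i)]; exact sum_succ_top hk c'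
  have hsv : (∑ i ∈ Finset.Icc 1 k, c i * a i) = (∑ i ∈ Finset.Icc 1 k, c' i * a i) + a k := by
    rw [Finset.sum_congr rfl (fun i _ => by rw [hcc i])]; exact sum_succ_top_mul hk c' a
  rw [hsv] at hv
  constructor
  · omega
  · exact ⟨c', by omega, by omega⟩

section Range
variable {k : ℕ} {a : ℕ → ℕ} {n : ℕ → ℕ} (hk : 1 ≤ k) (hn : ∀ h, IsRange k a h (n h))

include hn in
lemma range_mono_succ (h : ℕ) : n h ≤ n (h + 1) := by
  by_contra hlt
  push_neg at hlt
  exact (hn (h + 1)).2 (isRep_mono (Nat.le_succ h) ((hn h).1 _ (by omega)))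

include hn in
lemma range_mono {h h' : ℕ} (hh : h ≤ h') : n h ≤ n h' := by
  induction hh with
  | refl => exact le_rfl
  | step h ih => exact ih.trans (range_mono_succ hn _)

include hk hn in
lemma range_step {h : ℕ} (hak : a k ≤ n (h + 1)) : n h + a k ≤ n (h + 1) := by
  have hrep : ∀ y ≤ n h + a k, IsRep k a (h + 1) y := by
    intro y hy
    rcases le_or_gt y (a k) with h1 | h1
    · exact (hn (h + 1)).1 y (h1.trans hak)
    · have : IsRep k a h (y - a k) := (hn h).1 _ (by omega)
      have := isRep_add hk this
      rwa [Nat.sub_add_cancel (by omega)] at this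
  by_contra hlt
  push_neg at hlt
  exact (hn (h + 1)).2 (hrep _ (by omega))

include hk hn in
lemma thm1 {h₀ : ℕ} (hh₀ : a k ≤ n h₀) (d : ℕ) :
    n (h₀ - 1) + d * a k ≤ n (h₀ - 1 + d) := by
  induction d with
  | zero => simp
  | succ m ih =>
    have hstep : n (h₀ - 1 + m) + a k ≤ n (h₀ - 1 + m + 1) := by
      refine range_step hk hn ?_
      exact hh₀.trans (range_mono hn (by omega))
    calc n (h₀ - 1) + (m + 1) * a k = (n (h₀ - 1) + m * a k) + a k := by ring
      _ ≤ n (h₀ - 1 + m) + a k := by omega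
      _ ≤ n (h₀ - 1 + m + 1) := hstep
      _ = n (h₀ - 1 + (m + 1)) := by ring_nf

end Range

/-- Let `H` satisfy `H·(a k - a (k-1)) ≥ (h₀-1)·a k - n(h₀-1)`. Then for all `h ≥ H` and all
`n(h) < x < h·a k`: any `h`-representation of `x` with `c k = 0` forces `x ≤ h·a (k-1)`;
consequently every gap `x` at level `h ≥ H` persists (`x + a k` is a gap at level `h+1`).
In particular `H ≥ h₂`, where `h₂` is minimal such that all gaps persist from `h₂` on. -/
theorem stmt14 (k : ℕ) (hk : 2 ≤ k) (a : ℕ → ℕ) (ha1 : a 1 = 1)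
    (hmono : StrictMonoOn a (Set.Icc 1 k))
    (n : ℕ → ℕ) (hn : ∀ h, IsRange k a h (n h))
    (h₀ : ℕ) (hh₀ : a k ≤ n h₀) (hmin : ∀ h, a k ≤ n h → h₀ ≤ h)
    (H : ℕ) (hH : (h₀ - 1) * a k ≤ H * (a k - a (k - 1)) + n (h₀ - 1))
    (h₂ : ℕ)
    (h₂pers : ∀ h, h₂ ≤ h → ∀ x, IsGap k a n h x → IsGap k a n (h + 1) (x + a k))
    (h₂min : ∀ h', (∀ h, h' ≤ h → ∀ x, IsGap k a n h x → IsGap k a n (h + 1) (x + a k)) →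
      h₂ ≤ h') :
    (∀ h, H ≤ h → ∀ x, n h < x → x < h * a k →
      ∀ c : ℕ → ℕ, (∑ i ∈ Finset.Icc 1 k, c i) ≤ h →
        (∑ i ∈ Finset.Icc 1 k, c i * a i) = x → c k = 0 → x ≤ h * a (k - 1)) ∧
    (∀ h, H ≤ h → ∀ x, IsGap k a n h x → IsGap k a n (h + 1) (x + a k)) ∧
    h₂ ≤ H := by
  have hk1 : 1 ≤ k := by omega
  have hB1 : 1 ≤ a (k - 1) := by
    have := hmono.monotoneOn (a := 1) (b := k - 1) ⟨le_rfl, by omega⟩ ⟨by omega, by omega⟩ (by omega)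
    omega
  have hBA : a (k - 1) < a k := hmono ⟨by omega, by omega⟩ ⟨by omega, le_rfl⟩ (by omega)
  have hA2 : 2 ≤ a k := by
    have := hmono (a := 1) (b := k) ⟨le_rfl, by omega⟩ ⟨by omega, le_rfl⟩ (by omega)
    omega
  set m := h₀ - 1 with hm
  set D := a k - a (k - 1) with hDdef
  have hD : a (k - 1) + D = a k := by omega
  -- the bound for representations avoiding a k
  have bound : ∀ h y, ∀ c : ℕ → ℕ, (∑ i ∈ Finset.Icc 1 k, c i) ≤ h →
      (∑ i ∈ Finset.Icc 1 k, c i * a i) = y → c k = 0 → y ≤ h * a (k - 1) := by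
    intro h y c hc hv hck
    have hterm : ∀ i ∈ Finset.Icc 1 k, c i * a i ≤ c i * a (k - 1) := by
      intro i hi
      rw [Finset.mem_Icc] at hi
      by_cases hik : i = k
      · subst hik; simp [hck]
      · have hle : a i ≤ a (k - 1) :=
          hmono.monotoneOn ⟨by omega, by omega⟩ ⟨by omega, by omega⟩ (by omega)
        exact Nat.mul_le_mul_left _ hle
    calc y = ∑ i ∈ Finset.Icc 1 k, c i * a i := hv.symm
      _ ≤ ∑ i ∈ Finset.Icc 1 k, c i * a (k - 1) := Finset.sum_le_sum hterm
      _ = (∑ i ∈ Finset.Icc 1 k, c i) * a (k - 1) := (Finset.sum_mul _ _ _).symm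
      _ ≤ h * a (k - 1) := Nat.mul_le_mul_right _ hc
  -- H ≥ h₀ - 1
  have hHm : m ≤ H := by
    rcases Nat.lt_or_ge h₀ 2 with h2 | h2
    · omega
    · have hnm : n m < a k := by
        by_contra hge
        push_neg at hge
        have := hmin m hge
        omega
      by_contra hlt
      push_neg at hlt
      have hH' : m * (a (k - 1) + D) ≤ H * D + n m := by rw [hD]; exact hH
      have hnm' : n m < a (k - 1) + D := by rw [hD]; exact hnm
      have hHD : H * D + D ≤ m * D := by
        have := Nat.mul_le_mul_right D (show H + 1 ≤ m by omega)
        nlinarith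
      have hmB : a (k - 1) ≤ m * a (k - 1) := by
        have := Nat.mul_le_mul_right (a (k - 1)) (show 1 ≤ m by omega)
        nlinarith
      nlinarith
  -- the key inequality
  have key : ∀ h, H ≤ h → (h + 1) * a (k - 1) ≤ n h + a k := by
    intro h hh
    obtain ⟨e, he⟩ : ∃ e, m + e = h := ⟨h - m, by omega⟩
    subst he
    have t1 : n m + e * (a (k - 1) + D) ≤ n (m + e) := by
      have := thm1 hk1 hn hh₀ e
      rw [← hm] at this
      rwa [hD]
    have hH' : m * (a (k - 1) + D) ≤ H * D + n m := by rw [hD]; exact hH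
    have hHD : H * D ≤ (m + e + 1) * D := Nat.mul_le_mul_right D (by omega)
    calc (m + e + 1) * a (k - 1) ≤ n (m + e) + a (k - 1) + D := by nlinarith
      _ = n (m + e) + a k := by omega
  -- part 2
  have part2 : ∀ h, H ≤ h → ∀ x, IsGap k a n h x → IsGap k a n (h + 1) (x + a k) := by
    intro h hh x hg
    obtain ⟨hx1, hx2, hx3⟩ := hg
    have hnr : ¬ IsRep k a (h + 1) (x + a k) := by
      rintro ⟨c, hc, hv⟩
      by_cases hck : c k = 0
      · have hb : x + a k ≤ (h + 1) * a (k - 1) := bound (h + 1) (x + a k) c hc hv hck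
        have := key h hh
        omega
      · obtain ⟨hak, hrep⟩ := isRep_peel hk1 c hc hv (by omega)
        rw [Nat.add_sub_cancel] at hrep
        exact hx3 hrep
    refine ⟨?_, ?_, hnr⟩
    · by_contra hle
      push_neg at hle
      exact hnr ((hn (h + 1)).1 _ hle)
    · have : (h + 1) * a k = h * a k + a k := by ring
      omega
  refine ⟨?_, part2, h₂min H part2⟩
  intro h _ x _ _ c hc hv hck
  exact bound h x c hc hv hck
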